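/- AND_n is computed by a nondeterministic OBDD of width 2, while every nondeterministic unitary OBDD computing AND_n has width at least n+1. Hence for all d₁, d₂ with 1 < d₁, d₂ ≤ n, the class of functions computed by width-d₂ NOBDDs is not contained in the class computed by width-d₁ nondeterministic unitary OBDDs. -/

import Mathlib

open scoped BigOperators

/-- State of a nondeterministic unitary OBDD of width `d` after reading input `x`
in variable order `π`: at step `j` the unitary `U j b` is applied, where `b` is the
value of the tested variable `x_{π j}`. -/
noncomputable def nuRun {n d : ℕ} (U : Fin n → Bool → Matrix (Fin d) (Fin d) ℂ)
    (π : Equiv.Perm (Fin n)) (init : Fin d → ℂ) (x : Fin n → Bool) : Fin d → ℂ :=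
  (List.ofFn fun j : Fin n => U j (x (π j))).foldl (fun v M => M.mulVec v) init

/-- All transition matrices are unitary. -/
def IsUnitaryFamily {n d : ℕ} (U : Fin n → Bool → Matrix (Fin d) (Fin d) ℂ) : Prop :=
  ∀ j b, U j b ∈ Matrix.unitaryGroup (Fin d) ℂ

/-- The initial state is a unit vector. -/
def NormalizedInit {d : ℕ} (init : Fin d → ℂ) : Prop :=
  ∑ q, ‖init q‖ ^ 2 = 1

/-- Nondeterministic acceptance: the projection of the final state onto the
accepting subspace (spanned by the accepting basis states `acc`) is nonzero. -/
def nuAccepts {n d : ℕ} (U : Fin n → Bool → Matrix (Fin d) (Fin d) ℂ)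
    (π : Equiv.Perm (Fin n)) (init : Fin d → ℂ) (acc : Finset (Fin d))
    (x : Fin n → Bool) : Prop :=
  ∃ q ∈ acc, nuRun U π init x q ≠ 0

/-- The NUOBDD computes `f`: it accepts exactly the inputs in `f⁻¹(1)`. -/
def nuComputes {n d : ℕ} (U : Fin n → Bool → Matrix (Fin d) (Fin d) ℂ)
    (π : Equiv.Perm (Fin n)) (init : Fin d → ℂ) (acc : Finset (Fin d))
    (f : (Fin n → Bool) → Bool) : Prop :=
  ∀ x, nuAccepts U π init acc x ↔ f x = true

/-- Number of 1s in the input. -/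
def countOnes {n : ℕ} (x : Fin n → Bool) : ℕ :=
  (Finset.univ.filter fun i => x i = true).card

/-- Nondeterministic acceptance for an NOBDD of width `d`: there is a computation
path starting at `s0`, following at each step `j` the nondeterministic transition
relation `step j b` on the tested bit value `b = x (π j)`, and ending in an
accepting node. -/
def noAccepts {n d : ℕ} (step : Fin n → Bool → Fin d → Fin d → Prop)
    (π : Equiv.Perm (Fin n)) (s0 : Fin d) (acc : Finset (Fin d))
    (x : Fin n → Bool) : Prop :=
  ∃ path : Fin (n + 1) → Fin d, path 0 = s0 ∧
    (∀ j : Fin n, step j (x (π j)) (path j.castSucc) (path j.succ)) ∧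
    path (Fin.last n) ∈ acc

/-- The NOBDD computes `f`: it accepts exactly the inputs in `f⁻¹(1)`. -/
def noComputes {n d : ℕ} (step : Fin n → Bool → Fin d → Fin d → Prop)
    (π : Equiv.Perm (Fin n)) (s0 : Fin d) (acc : Finset (Fin d))
    (f : (Fin n → Bool) → Bool) : Prop :=
  ∀ x, noAccepts step π s0 acc x ↔ f x = true

/-- `AND_n(σ) = 1` iff all bits of `σ` are 1. -/
def ANDn (n : ℕ) (x : Fin n → Bool) : Bool := decide (∀ i, x i = true)

/-- `f` is computed by some nondeterministic OBDD of width `d`. -/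
def computedByNOBDD (n d : ℕ) (f : (Fin n → Bool) → Bool) : Prop :=
  ∃ (step : Fin n → Bool → Fin d → Fin d → Prop) (π : Equiv.Perm (Fin n))
    (s0 : Fin d) (acc : Finset (Fin d)), noComputes step π s0 acc f

/-- `f` is computed by some nondeterministic unitary OBDD of width `d`. -/
def computedByNUOBDD (n d : ℕ) (f : (Fin n → Bool) → Bool) : Prop :=
  ∃ (U : Fin n → Bool → Matrix (Fin d) (Fin d) ℂ) (π : Equiv.Perm (Fin n))
    (init : Fin d → ℂ) (acc : Finset (Fin d)),
    IsUnitaryFamily U ∧ NormalizedInit init ∧ nuComputes U π init acc f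

/-! ### Auxiliary machinery for the lower bound -/

namespace NUOBDDAux

/-- Run of an NUOBDD (identity order on the reordered input `y`) for the first
`j` steps only. -/
noncomputable def runJ {n d : ℕ} (U : Fin n → Bool → Matrix (Fin d) (Fin d) ℂ)
    (init : Fin d → ℂ) (j : ℕ) (hj : j ≤ n) (y : Fin n → Bool) : Fin d → ℂ :=
  (List.ofFn fun i : Fin j => U (Fin.castLE hj i) (y (Fin.castLE hj i))).foldl
    (fun v M => M.mulVec v) init

/-- The input `y` with all bits from position `j` on replaced by `true`. -/
def splice {n : ℕ} (j : ℕ) (y : Fin n → Bool) : Fin n → Bool :=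
  fun i => if (i : ℕ) < j then y i else true

/-- The input whose first `k` bits are `true` and the rest `false`. -/
def wIn {n : ℕ} (k : ℕ) : Fin n → Bool := fun i => decide ((i : ℕ) < k)

variable {n d : ℕ} (U : Fin n → Bool → Matrix (Fin d) (Fin d) ℂ) (init : Fin d → ℂ)

lemma runJ_congr {j : ℕ} (hj : j ≤ n) {y y' : Fin n → Bool}
    (h : ∀ i : Fin n, (i : ℕ) < j → y i = y' i) :
    runJ U init j hj y = runJ U init j hj y' := by
  unfold runJ
  have : (fun i : Fin j => U (Fin.castLE hj i) (y (Fin.castLE hj i)))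
      = (fun i : Fin j => U (Fin.castLE hj i) (y' (Fin.castLE hj i))) := by
    funext i
    rw [h (Fin.castLE hj i) (by simp)]
  rw [this]

lemma runJ_succ {j : ℕ} (hj : j + 1 ≤ n) (y : Fin n → Bool) :
    runJ U init (j + 1) hj y =
      (U ⟨j, hj⟩ (y ⟨j, hj⟩)).mulVec (runJ U init j (Nat.le_of_succ_le hj) y) := by
  unfold runJ
  rw [List.ofFn_succ', List.concat_eq_append, List.foldl_append]
  rfl

lemma runJ_full (π : Equiv.Perm (Fin n)) (x : Fin n → Bool) :
    nuRun U π init x = runJ U init n le_rfl (fun j => x (π j)) := rfl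

lemma unit_mulVec_inj (M : Matrix (Fin d) (Fin d) ℂ)
    (hM : M ∈ Matrix.unitaryGroup (Fin d) ℂ) {v : Fin d → ℂ}
    (h : M.mulVec v = 0) : v = 0 := by
  have h1 : (star M) * M = 1 := (Unitary.mem_iff.mp hM).1
  calc v = ((star M) * M).mulVec v := by rw [h1, Matrix.one_mulVec]
    _ = (star M).mulVec (M.mulVec v) := by rw [Matrix.mulVec_mulVec]
    _ = 0 := by rw [h, Matrix.mulVec_zero]

lemma init_ne_zero {init : Fin d → ℂ} (h : NormalizedInit init) : init ≠ 0 := by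
  intro h0
  rw [NormalizedInit, h0] at h
  simp at h

/-- Backward functional: apply the remaining steps with input bit `true`, then
read off coordinate `qs`. -/
lemma phi_exists (qs : Fin d) :
    ∀ m j (_ : j + m = n), ∃ φ : (Fin d → ℂ) →ₗ[ℂ] ℂ,
      ∀ y : Fin n → Bool,
        φ (runJ U init j (by omega) y) = runJ U init n le_rfl (splice j y) qs := by
  intro m
  induction m with
  | zero =>
    intro j hm
    refine ⟨LinearMap.proj qs, fun y => ?_⟩
    subst hm
    have : splice j y = y := by
      funext i; simp [splice, i.isLt]
    rw [this]
    rfl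
  | succ m ih =>
    intro j hm
    obtain ⟨φ', hφ'⟩ := ih (j + 1) (by omega)
    have hj1 : j + 1 ≤ n := by omega
    refine ⟨φ'.comp (Matrix.mulVecLin (U ⟨j, hj1⟩ true)), fun y => ?_⟩
    have key : runJ U init (j + 1) hj1 (splice j y)
        = (U ⟨j, hj1⟩ true).mulVec (runJ U init j (by omega) y) := by
      rw [runJ_succ]
      have h1 : splice j y ⟨j, hj1⟩ = true := by simp [splice]
      rw [h1]
      exact congrArg _ (runJ_congr U init _ (fun i hi => by simp [splice, hi]))
    have h2 : splice (j + 1) (splice j y) = splice j y := by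
      funext i
      by_cases h : (i : ℕ) < j
      · simp [splice, h, Nat.lt_succ_of_lt h]
      · by_cases h' : (i : ℕ) < j + 1 <;> simp [splice, h, h']
    calc (φ'.comp (Matrix.mulVecLin (U ⟨j, hj1⟩ true))) (runJ U init j (by omega) y)
        = φ' (runJ U init (j + 1) hj1 (splice j y)) := by rw [key]; rfl
      _ = runJ U init n le_rfl (splice (j + 1) (splice j y)) qs := hφ' (splice j y)
      _ = runJ U init n le_rfl (splice j y) qs := by rw [h2]

end NUOBDDAux

open NUOBDDAux in
/-- Any NUOBDD computing `AND_n` has width at least `n + 1`. -/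
lemma nuobdd_lower {n d : ℕ} (U : Fin n → Bool → Matrix (Fin d) (Fin d) ℂ)
    (π : Equiv.Perm (Fin n)) (init : Fin d → ℂ) (acc : Finset (Fin d))
    (hU : IsUnitaryFamily U) (hinit : NormalizedInit init)
    (hc : nuComputes U π init acc (ANDn n)) : n + 1 ≤ d := by
  -- acceptance criterion in terms of `runJ` on reordered inputs
  have hacc : ∀ y : Fin n → Bool,
      (∃ q ∈ acc, runJ U init n le_rfl y q ≠ 0) ↔ (∀ i, y i = true) := by
    intro y
    have hthis := hc (fun i => y (π.symm i))
    unfold nuAccepts at hthis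
    rw [runJ_full] at hthis
    have e : (fun j => (fun i => y (π.symm i)) (π j)) = y := by
      funext j; simp
    rw [e] at hthis
    rw [hthis]
    simp only [ANDn, decide_eq_true_eq]
    exact ⟨fun h i => by simpa using h (π i), fun h i => h _⟩
  -- the accepting coordinate on the all-ones input
  obtain ⟨qs, hqsmem, hqs⟩ := (hacc (fun _ => true)).mpr (fun _ => rfl)
  -- rejecting inputs vanish at that coordinate
  have hrej : ∀ y : Fin n → Bool, (∃ i, y i = false) →
      runJ U init n le_rfl y qs = 0 := by
    rintro y ⟨i, hi⟩
    by_contra hne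
    have := (hacc y).mp ⟨qs, hqsmem, hne⟩ i
    rw [hi] at this
    exact Bool.false_ne_true this
  -- main induction: the partial-run vectors on staircase inputs are independent
  have claim : ∀ j (hj : j ≤ n) (a : ℕ → ℂ),
      (∑ k ∈ Finset.range (j + 1), a k • runJ U init j hj (wIn k)) = 0 →
      ∀ k, k ≤ j → a k = 0 := by
    intro j
    induction j with
    | zero =>
      intro hj a hsum k hk
      rw [Finset.sum_range_one] at hsum
      have hrz : runJ U init 0 hj (wIn 0) = init := by simp [runJ]
      rw [hrz] at hsum
      interval_cases k
      exact (smul_eq_zero.mp hsum).resolve_right (init_ne_zero hinit)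
    | succ j ih =>
      intro hj a hsum k hk
      obtain ⟨φ, hφ⟩ := phi_exists U init qs (n - (j + 1)) (j + 1) (by omega)
      have h1 : a (j + 1) = 0 := by
        have h2 := congrArg φ hsum
        rw [map_sum, map_zero] at h2
        simp only [map_smul] at h2
        rw [Finset.sum_range_succ] at h2
        have hz : ∀ k ∈ Finset.range (j + 1),
            a k • φ (runJ U init (j + 1) hj (wIn k)) = 0 := by
          intro k hk'
          rw [Finset.mem_range] at hk'
          rw [hφ]
          have : runJ U init n le_rfl (splice (j + 1) (wIn k)) qs = 0 := by
            apply hrej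
            refine ⟨⟨k, by omega⟩, ?_⟩
            simp [splice, wIn, hk']
          rw [this, smul_zero]
        rw [Finset.sum_eq_zero hz, zero_add, hφ] at h2
        have hsp : splice (j + 1) (wIn (j + 1) : Fin n → Bool) = (fun _ => true) := by
          funext i
          by_cases h : (i : ℕ) < j + 1 <;> simp [splice, wIn, h]
        rw [hsp] at h2
        exact (smul_eq_zero.mp h2).resolve_right hqs
      rw [Finset.sum_range_succ, h1, zero_smul, add_zero] at hsum
      have hj' : j ≤ n := Nat.le_of_succ_le hj
      have hstep : ∀ k ∈ Finset.range (j + 1),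
          a k • runJ U init (j + 1) hj (wIn k)
            = a k • (U ⟨j, hj⟩ false).mulVec (runJ U init j hj' (wIn k)) := by
        intro k hk'
        rw [Finset.mem_range] at hk'
        rw [runJ_succ]
        have : (wIn k : Fin n → Bool) ⟨j, hj⟩ = false := by
          simp [wIn]; omega
        rw [this]
      rw [Finset.sum_congr rfl hstep] at hsum
      have hsum2 : (U ⟨j, hj⟩ false).mulVec
          (∑ k ∈ Finset.range (j + 1), a k • runJ U init j hj' (wIn k)) = 0 := by
        rw [show (U ⟨j, hj⟩ false).mulVec
            (∑ k ∈ Finset.range (j + 1), a k • runJ U init j hj' (wIn k))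
          = (U ⟨j, hj⟩ false).mulVecLin
            (∑ k ∈ Finset.range (j + 1), a k • runJ U init j hj' (wIn k)) from rfl]
        rw [map_sum]
        simp only [map_smul, Matrix.mulVecLin_apply]
        exact hsum
      have hzero := unit_mulVec_inj (U ⟨j, hj⟩ false) (hU _ _) hsum2
      rcases Nat.lt_or_ge k (j + 1) with h | h
      · exact ih hj' a hzero k (by omega)
      · have : k = j + 1 := by omega
        rw [this]; exact h1
  -- conclude by linear independence
  have hli : LinearIndependent ℂ
      (fun k : Fin (n + 1) => runJ U init n le_rfl (wIn (k : ℕ))) := by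
    rw [Fintype.linearIndependent_iff]
    intro g hg i
    have ha := claim n le_rfl
      (fun k => if h : k < n + 1 then g ⟨k, h⟩ else 0) ?_ i.1 (by omega)
    · simpa [i.isLt] using ha
    · rw [← hg, ← Fin.sum_univ_eq_sum_range
        (fun k => (if h : k < n + 1 then g ⟨k, h⟩ else 0) • runJ U init n le_rfl (wIn k))]
      apply Finset.sum_congr rfl
      intro i _
      simp [i.isLt]
  have := hli.fintype_card_le_finrank
  simpa using this

/-- `AND_n` is computed by a width-`d` NOBDD for any `d ≥ 2`. -/
lemma nobdd_and (n d : ℕ) (hd : 2 ≤ d) : computedByNOBDD n d (ANDn n) := by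
  have h0 : (0 : ℕ) < d := by omega
  have h1 : (1 : ℕ) < d := by omega
  set z : Fin d := ⟨0, h0⟩ with hzdef
  set o : Fin d := ⟨1, h1⟩ with hodef
  have hzo : z ≠ o := by
    intro h
    have := congrArg Fin.val h
    simp [hzdef, hodef] at this
  refine ⟨fun _ b s t => t = if s = z ∧ b = true then z else o, 1, z, {z}, fun x => ?_⟩
  constructor
  · rintro ⟨p, hp0, hstep, hlast⟩
    have key : ∀ m (hm : m ≤ n), p ⟨m, by omega⟩ = z →
        ∀ i : Fin n, (i : ℕ) < m → x i = true := by
      intro m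
      induction m with
      | zero => intro _ _ i hi; omega
      | succ m ih =>
        intro hm hpz i hi
        have hmn : m < n := by omega
        have hs : p ⟨m + 1, by omega⟩
            = if p ⟨m, by omega⟩ = z ∧ x ⟨m, hmn⟩ = true then z else o :=
          hstep ⟨m, hmn⟩
        have hif : z = if p ⟨m, by omega⟩ = z ∧ x ⟨m, hmn⟩ = true then z else o :=
          hpz.symm.trans hs
        by_cases hcond : p ⟨m, by omega⟩ = z ∧ x ⟨m, hmn⟩ = true
        · rcases Nat.lt_or_ge (i : ℕ) m with h | h
          · exact ih (by omega) hcond.1 i h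
          · have hieq : i = ⟨m, hmn⟩ := Fin.ext (by simpa using (by omega : (i : ℕ) = m))
            rw [hieq]; exact hcond.2
        · rw [if_neg hcond] at hif
          exact absurd hif hzo
    have hplast : p (Fin.last n) = z := Finset.mem_singleton.mp hlast
    have hall := key n le_rfl hplast
    simp only [ANDn, decide_eq_true_eq]
    intro i
    exact hall i i.isLt
  · intro hall
    have hx : ∀ i, x i = true := by
      simpa [ANDn, decide_eq_true_eq] using hall
    refine ⟨fun _ => z, rfl, fun j => ?_, by simp⟩
    show z = if z = z ∧ x ((1 : Equiv.Perm (Fin n)) j) = true then z else o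
    rw [if_pos ⟨rfl, hx _⟩]

theorem nobdd_not_subset_nuobdd (n : ℕ) (hn : 1 ≤ n) :
    computedByNOBDD n 2 (ANDn n) ∧
    (∀ d, computedByNUOBDD n d (ANDn n) → n + 1 ≤ d) ∧
    (∀ d₁ d₂, 1 < d₁ → d₁ ≤ n → 1 < d₂ → d₂ ≤ n →
      ∃ f : (Fin n → Bool) → Bool,
        computedByNOBDD n d₂ f ∧ ¬ computedByNUOBDD n d₁ f) := by
  have lower : ∀ d, computedByNUOBDD n d (ANDn n) → n + 1 ≤ d := by
    rintro d ⟨U, π, init, acc, hU, hinit, hc⟩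
    exact nuobdd_lower U π init acc hU hinit hc
  refine ⟨nobdd_and n 2 le_rfl, lower, ?_⟩
  intro d₁ d₂ hd₁ hd₁n hd₂ hd₂n
  refine ⟨ANDn n, nobdd_and n d₂ (by omega), fun h => ?_⟩
  have := lower d₁ h
  omega
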